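/- Let A ∈ ℝ^{n×n}, B ∈ ℝ^{n×m}, C ∈ ℝ^{p×n}. Let Q¹¹, Q¹², Q²² : [0,T) → ℝ^{n×n} be differentiable and satisfy: Q̇¹¹_t = AᵀQ¹¹_t + Q¹¹_tA + Q¹¹_tBBᵀQ¹¹_t + CᵀC, Q̇¹²_t = (A + BBᵀQ¹¹_t)ᵀQ¹²_t, Q̇²²_t = (Q¹²_t)ᵀBBᵀQ¹²_t, with Q¹¹₀ = M, Q¹²₀ = −M, Q²²₀ = M for a symmetric matrix M. Then the block matrix Q_t = [[Q¹¹_t, Q¹²_t],[(Q¹²_t)ᵀ, Q²²_t]] satisfies the 2n-dimensional Riccati equation Q̇_t = ÂᵀQ_t + Q_tÂ + Q_tB̂B̂ᵀQ_t + ĈᵀĈ with Â = [[A,0],[0,0]], B̂ = [B;0], Ĉ = [C 0], and initial condition Q₀ = [[M,−M],[−M,M]]. -/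

import Mathlib

open Matrix

namespace BlockRiccatiAux

open Set

/-- View a matrix as a plain function, to use the sup (`Pi`) norm. -/
def toE {a b : ℕ} (X : Matrix (Fin a) (Fin b) ℝ) : Fin a → Fin b → ℝ := fun i j => X i j

lemma entry_le {a b : ℕ} (X : Matrix (Fin a) (Fin b) ℝ) (i : Fin a) (j : Fin b) :
    |X i j| ≤ ‖toE X‖ :=
  le_trans (norm_le_pi_norm (toE X i) j) (norm_le_pi_norm (toE X) i)

lemma norm_toE_mul_le {a b c : ℕ} (X : Matrix (Fin a) (Fin b) ℝ)
    (Y : Matrix (Fin b) (Fin c) ℝ) :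
    ‖toE (X * Y)‖ ≤ (b : ℝ) * ‖toE X‖ * ‖toE Y‖ := by
  have hnn : (0:ℝ) ≤ (b : ℝ) * ‖toE X‖ * ‖toE Y‖ := by positivity
  refine (pi_norm_le_iff_of_nonneg hnn).2 fun i => (pi_norm_le_iff_of_nonneg hnn).2 fun j => ?_
  show |(X * Y) i j| ≤ _
  rw [Matrix.mul_apply]
  calc |∑ k, X i k * Y k j| ≤ ∑ k, |X i k * Y k j| := Finset.abs_sum_le_sum_abs _ _
    _ ≤ ∑ _k : Fin b, ‖toE X‖ * ‖toE Y‖ := by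
        refine Finset.sum_le_sum fun k _ => ?_
        rw [abs_mul]
        exact mul_le_mul (entry_le X i k) (entry_le Y k j) (abs_nonneg _) (norm_nonneg _)
    _ = (b : ℝ) * ‖toE X‖ * ‖toE Y‖ := by
        simp [Finset.sum_const, mul_assoc]

lemma norm_toE_transpose {a b : ℕ} (X : Matrix (Fin a) (Fin b) ℝ) :
    ‖toE Xᵀ‖ = ‖toE X‖ := by
  have key : ∀ {a b : ℕ} (X : Matrix (Fin a) (Fin b) ℝ), ‖toE Xᵀ‖ ≤ ‖toE X‖ := by
    intro a b X
    refine (pi_norm_le_iff_of_nonneg (norm_nonneg _)).2 fun i =>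
      (pi_norm_le_iff_of_nonneg (norm_nonneg _)).2 fun j => ?_
    exact entry_le X j i
  exact le_antisymm (key X) (by simpa using key Xᵀ)

/-- The `Q11` block stays symmetric: `Q11ᵀ` solves the same Riccati equation, and we
use a Grönwall estimate on `Q11 - Q11ᵀ`. -/
lemma Q11_symm {n m p : ℕ} {T : ℝ}
    (A : Matrix (Fin n) (Fin n) ℝ) (B : Matrix (Fin n) (Fin m) ℝ)
    (C : Matrix (Fin p) (Fin n) ℝ) (M : Matrix (Fin n) (Fin n) ℝ) (hM : Mᵀ = M)
    (Q11 : ℝ → Matrix (Fin n) (Fin n) ℝ)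
    (h11 : ∀ t ∈ Set.Ico (0:ℝ) T, ∀ i j, HasDerivAt (fun s => Q11 s i j)
      ((Aᵀ * Q11 t + Q11 t * A + Q11 t * B * Bᵀ * Q11 t + Cᵀ * C) i j) t)
    (h110 : Q11 0 = M) :
    ∀ t ∈ Set.Ico (0:ℝ) T, (Q11 t)ᵀ = Q11 t := by
  intro t₁ ht₁
  set G : Matrix (Fin n) (Fin n) ℝ := B * Bᵀ with hG
  set R : ℝ → Matrix (Fin n) (Fin n) ℝ :=
    fun s => Aᵀ * Q11 s + Q11 s * A + Q11 s * B * Bᵀ * Q11 s + Cᵀ * C with hR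
  set D : ℝ → (Fin n → Fin n → ℝ) := fun s => toE (Q11 s - (Q11 s)ᵀ) with hDdef
  have hIcc : Icc (0:ℝ) t₁ ⊆ Ico (0:ℝ) T := fun s hs => ⟨hs.1, lt_of_le_of_lt hs.2 ht₁.2⟩
  -- derivative of D
  have hD : ∀ t ∈ Ico (0:ℝ) T, HasDerivAt D (toE (R t - (R t)ᵀ)) t := by
    intro t ht
    rw [hasDerivAt_pi]; intro i; rw [hasDerivAt_pi]; intro j
    exact (h11 t ht i j).sub (h11 t ht j i)
  -- algebraic identity
  have hAlg : ∀ t, R t - (R t)ᵀ =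
      Aᵀ * (Q11 t - (Q11 t)ᵀ) + (Q11 t - (Q11 t)ᵀ) * A
        + (Q11 t * G) * (Q11 t - (Q11 t)ᵀ) + (Q11 t - (Q11 t)ᵀ) * (G * (Q11 t)ᵀ) := by
    intro t
    simp only [hR, hG, transpose_add, transpose_mul, transpose_transpose, sub_mul, mul_sub,
      Matrix.mul_assoc]
    abel
  -- continuity of Q11, D on [0, t₁]
  have hQcont : ContinuousOn (fun s => toE (Q11 s)) (Icc 0 t₁) := by
    intro s hs
    have : HasDerivAt (fun s => toE (Q11 s)) (toE (R s)) s := by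
      rw [hasDerivAt_pi]; intro i; rw [hasDerivAt_pi]; intro j
      exact h11 s (hIcc hs) i j
    exact this.continuousAt.continuousWithinAt
  have hDcont : ContinuousOn D (Icc 0 t₁) := fun s hs =>
    ((hD s (hIcc hs)).continuousAt).continuousWithinAt
  -- bound on Q11
  obtain ⟨C₀, hC₀⟩ := (isCompact_Icc).exists_bound_of_continuousOn hQcont
  set Cb : ℝ := max C₀ 0 with hCb
  have hCb0 : (0:ℝ) ≤ Cb := le_max_right _ _
  have hQb : ∀ s ∈ Icc (0:ℝ) t₁, ‖toE (Q11 s)‖ ≤ Cb :=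
    fun s hs => le_trans (hC₀ s hs) (le_max_left _ _)
  set g : ℝ := ‖toE G‖ with hg
  have hgn : (0:ℝ) ≤ g := norm_nonneg _
  set K : ℝ := (n:ℝ) * ‖toE Aᵀ‖ + (n:ℝ) * ‖toE A‖ + (n:ℝ) * ((n:ℝ) * Cb * g)
      + (n:ℝ) * ((n:ℝ) * g * Cb) with hK
  -- Gronwall bound hypothesis
  have bound : ∀ s ∈ Ico (0:ℝ) t₁, ‖toE (R s - (R s)ᵀ)‖ ≤ K * ‖D s‖ + 0 := by
    intro s hs
    have hsIcc : s ∈ Icc (0:ℝ) t₁ := ⟨hs.1, le_of_lt hs.2⟩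
    set Δ : Matrix (Fin n) (Fin n) ℝ := Q11 s - (Q11 s)ᵀ with hΔ
    have hDs : D s = toE Δ := rfl
    have h1 : ‖toE (Aᵀ * Δ)‖ ≤ ((n:ℝ) * ‖toE Aᵀ‖) * ‖toE Δ‖ := norm_toE_mul_le Aᵀ Δ
    have h2 : ‖toE (Δ * A)‖ ≤ ((n:ℝ) * ‖toE A‖) * ‖toE Δ‖ :=
      calc ‖toE (Δ * A)‖ ≤ (n:ℝ) * ‖toE Δ‖ * ‖toE A‖ := norm_toE_mul_le Δ A
        _ = ((n:ℝ) * ‖toE A‖) * ‖toE Δ‖ := by ring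
    have h3 : ‖toE ((Q11 s * G) * Δ)‖ ≤ ((n:ℝ) * ((n:ℝ) * Cb * g)) * ‖toE Δ‖ := by
      have hx : ‖toE (Q11 s * G)‖ ≤ (n:ℝ) * Cb * g := by
        refine (norm_toE_mul_le (Q11 s) G).trans ?_
        rw [hg]; gcongr
        exact hQb s hsIcc
      calc ‖toE ((Q11 s * G) * Δ)‖ ≤ (n:ℝ) * ‖toE (Q11 s * G)‖ * ‖toE Δ‖ :=
            norm_toE_mul_le (Q11 s * G) Δ
        _ ≤ ((n:ℝ) * ((n:ℝ) * Cb * g)) * ‖toE Δ‖ := by gcongr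
    have h4 : ‖toE (Δ * (G * (Q11 s)ᵀ))‖ ≤ ((n:ℝ) * ((n:ℝ) * g * Cb)) * ‖toE Δ‖ := by
      have hx : ‖toE (G * (Q11 s)ᵀ)‖ ≤ (n:ℝ) * g * Cb := by
        refine (norm_toE_mul_le G ((Q11 s)ᵀ)).trans ?_
        rw [hg]; gcongr
        rw [norm_toE_transpose]; exact hQb s hsIcc
      calc ‖toE (Δ * (G * (Q11 s)ᵀ))‖ ≤ (n:ℝ) * ‖toE Δ‖ * ‖toE (G * (Q11 s)ᵀ)‖ :=
            norm_toE_mul_le Δ (G * (Q11 s)ᵀ)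
        _ ≤ (n:ℝ) * ‖toE Δ‖ * ((n:ℝ) * g * Cb) := by gcongr
        _ = ((n:ℝ) * ((n:ℝ) * g * Cb)) * ‖toE Δ‖ := by ring
    have hsum : ‖toE (R s - (R s)ᵀ)‖ ≤ ‖toE (Aᵀ * Δ)‖ + ‖toE (Δ * A)‖
        + ‖toE ((Q11 s * G) * Δ)‖ + ‖toE (Δ * (G * (Q11 s)ᵀ))‖ := by
      rw [hAlg s]
      calc ‖toE (Aᵀ * Δ + Δ * A + (Q11 s * G) * Δ + Δ * (G * (Q11 s)ᵀ))‖
          = ‖toE (Aᵀ * Δ) + toE (Δ * A) + toE ((Q11 s * G) * Δ) + toE (Δ * (G * (Q11 s)ᵀ))‖ := rfl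
        _ ≤ _ := by
            refine le_trans (norm_add_le _ _) ?_
            refine add_le_add ?_ le_rfl
            refine le_trans (norm_add_le _ _) ?_
            exact add_le_add (norm_add_le _ _) le_rfl
    rw [hDs, hK]
    linarith [h1, h2, h3, h4, hsum]
  have hgron := norm_le_gronwallBound_of_norm_deriv_right_le (f := D)
    (f' := fun s => toE (R s - (R s)ᵀ)) (δ := 0) (K := K) (ε := 0) (a := 0) (b := t₁)
    hDcont
    (fun s hs => ((hD s (hIcc ⟨hs.1, le_of_lt hs.2⟩)).hasDerivWithinAt))
    (by
      have : D 0 = 0 := by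
        simp only [hDdef, h110, hM, sub_self]
        rfl
      rw [this]; simp)
    bound
  have := hgron t₁ ⟨ht₁.1, le_refl _⟩
  rw [gronwallBound_ε0_δ0] at this
  have hD0 : D t₁ = 0 := by
    have h0 : ‖D t₁‖ ≤ 0 := this
    exact norm_le_zero_iff.mp h0
  have : Q11 t₁ - (Q11 t₁)ᵀ = 0 := by
    ext i j
    exact congrFun (congrFun hD0 i) j
  have := sub_eq_zero.mp this
  exact this.symm

end BlockRiccatiAux

/-- The three coupled block ODEs for `Q¹¹, Q¹², Q²²` are exactly the block
decomposition of the `2n`-dimensional differential Riccati equation with data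
`Â = [[A,0],[0,0]]`, `B̂ = [B;0]`, `Ĉ = [C 0]` and `Q₀ = [[M,−M],[−M,M]]`. -/
theorem block_riccati_equivalence {n m p : ℕ} (T : ℝ) (hT : 0 < T)
    (A : Matrix (Fin n) (Fin n) ℝ) (B : Matrix (Fin n) (Fin m) ℝ)
    (C : Matrix (Fin p) (Fin n) ℝ) (M : Matrix (Fin n) (Fin n) ℝ) (hM : Mᵀ = M)
    (Q11 Q12 Q22 : ℝ → Matrix (Fin n) (Fin n) ℝ)
    (h11 : ∀ t ∈ Set.Ico (0:ℝ) T, ∀ i j, HasDerivAt (fun s => Q11 s i j)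
      ((Aᵀ * Q11 t + Q11 t * A + Q11 t * B * Bᵀ * Q11 t + Cᵀ * C) i j) t)
    (h12 : ∀ t ∈ Set.Ico (0:ℝ) T, ∀ i j, HasDerivAt (fun s => Q12 s i j)
      (((A + B * Bᵀ * Q11 t)ᵀ * Q12 t) i j) t)
    (h22 : ∀ t ∈ Set.Ico (0:ℝ) T, ∀ i j, HasDerivAt (fun s => Q22 s i j)
      (((Q12 t)ᵀ * B * Bᵀ * Q12 t) i j) t)
    (h110 : Q11 0 = M) (h120 : Q12 0 = -M) (h220 : Q22 0 = M) :
    let Ahat : Matrix (Fin n ⊕ Fin n) (Fin n ⊕ Fin n) ℝ := fromBlocks A 0 0 0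
    let Bhat : Matrix (Fin n ⊕ Fin n) (Fin m) ℝ := fromRows B 0
    let Chat : Matrix (Fin p) (Fin n ⊕ Fin n) ℝ := fromCols C 0
    let Q : ℝ → Matrix (Fin n ⊕ Fin n) (Fin n ⊕ Fin n) ℝ :=
      fun t => fromBlocks (Q11 t) (Q12 t) (Q12 t)ᵀ (Q22 t)
    (∀ t ∈ Set.Ico (0:ℝ) T, ∀ i j, HasDerivAt (fun s => Q s i j)
      ((Ahatᵀ * Q t + Q t * Ahat + Q t * Bhat * Bhatᵀ * Q t + Chatᵀ * Chat) i j) t) ∧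
      Q 0 = fromBlocks M (-M) (-M) M := by
  intro Ahat Bhat Chat Q
  have hsym : ∀ t ∈ Set.Ico (0:ℝ) T, (Q11 t)ᵀ = Q11 t :=
    BlockRiccatiAux.Q11_symm A B C M hM Q11 h11 h110
  constructor
  · intro t ht i j
    have hs := hsym t ht
    have hmat : Ahatᵀ * Q t + Q t * Ahat + Q t * Bhat * Bhatᵀ * Q t + Chatᵀ * Chat
        = fromBlocks
            (Aᵀ * Q11 t + Q11 t * A + Q11 t * B * Bᵀ * Q11 t + Cᵀ * C)
            ((A + B * Bᵀ * Q11 t)ᵀ * Q12 t)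
            (((A + B * Bᵀ * Q11 t)ᵀ * Q12 t)ᵀ)
            ((Q12 t)ᵀ * B * Bᵀ * Q12 t) := by
      have hB : Bhat * Bhatᵀ = fromBlocks (B * Bᵀ) 0 0 0 := by
        show fromRows B 0 * (fromRows B 0)ᵀ = _
        rw [transpose_fromRows, fromRows_mul_fromCols]
        simp
      have hC : Chatᵀ * Chat = fromBlocks (Cᵀ * C) 0 0 0 := by
        show (fromCols C 0)ᵀ * fromCols C 0 = _
        rw [transpose_fromCols, fromRows_mul_fromCols]
        simp
      rw [Matrix.mul_assoc (Q t) Bhat Bhatᵀ, hB, hC]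
      show (fromBlocks A 0 0 0)ᵀ * fromBlocks (Q11 t) (Q12 t) (Q12 t)ᵀ (Q22 t)
          + fromBlocks (Q11 t) (Q12 t) (Q12 t)ᵀ (Q22 t) * fromBlocks A 0 0 0
          + fromBlocks (Q11 t) (Q12 t) (Q12 t)ᵀ (Q22 t) * fromBlocks (B * Bᵀ) 0 0 0
            * fromBlocks (Q11 t) (Q12 t) (Q12 t)ᵀ (Q22 t)
          + fromBlocks (Cᵀ * C) 0 0 0 = _
      rw [fromBlocks_transpose]
      simp only [fromBlocks_multiply, fromBlocks_add, Matrix.mul_zero, Matrix.zero_mul,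
        add_zero, zero_add, transpose_zero, Matrix.mul_add, Matrix.add_mul]
      rw [fromBlocks_inj]
      refine ⟨?_, ?_, ?_, ?_⟩
      · simp only [Matrix.mul_assoc]
      · simp only [transpose_add, transpose_mul, transpose_transpose, hs, Matrix.add_mul,
          Matrix.mul_assoc]
      · simp only [transpose_add, transpose_mul, transpose_transpose, Matrix.mul_add,
          Matrix.add_mul, Matrix.mul_assoc]
      · simp only [Matrix.mul_assoc]
    rw [hmat]
    rcases i with i | i <;> rcases j with j | j
    · simpa only [Q, fromBlocks_apply₁₁] using h11 t ht i j
    · simpa only [Q, fromBlocks_apply₁₂] using h12 t ht i j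
    · simpa only [Q, fromBlocks_apply₂₁, transpose_apply] using h12 t ht j i
    · simpa only [Q, fromBlocks_apply₂₂] using h22 t ht i j
  · show fromBlocks (Q11 0) (Q12 0) (Q12 0)ᵀ (Q22 0) = _
    rw [h110, h120, h220, transpose_neg, hM]
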